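/- The function F(α) = Γ(α+3)Γ(α/2 + 9/2) / (Γ(α/2 + 2)Γ(α + 9/2)) is monotone increasing on the interval [0,2]. -/

import Mathlib

open Real Filter Finset Topology

namespace FMonoAux

/-- `lam a b c = log (b + c) - log (a + c)`. -/
noncomputable def lam (a b c : ℝ) : ℝ := Real.log (b + c) - Real.log (a + c)

lemma lam_nonneg {a b c : ℝ} (hab : a ≤ b) (hc : 0 < a + c) : 0 ≤ lam a b c :=
  sub_nonneg.mpr (Real.log_le_log hc (by linarith))

lemma lam_anti {a b c c' : ℝ} (hab : a ≤ b) (hc : 0 < a + c) (hcc : c ≤ c') :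
    lam a b c' ≤ lam a b c := by
  have h1 : 0 < a + c' := by linarith
  have h2 : 0 < b + c := by linarith
  have h3 : 0 < b + c' := by linarith
  have key : (b + c') * (a + c) ≤ (a + c') * (b + c) := by nlinarith
  have h4 : 0 < (b + c') * (a + c) := by positivity
  have h5 := Real.log_le_log h4 key
  rw [Real.log_mul h3.ne' hc.ne', Real.log_mul h1.ne' h2.ne'] at h5
  simp only [lam]; linarith

lemma lam_pair {a b : ℝ} (ha : 0 ≤ a) (hab : a ≤ b) {c : ℝ} (hc : 1 ≤ c) :
    2 * lam a b c ≤ lam a b (c - 1/2) + lam a b (c + 1/2) := by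
  have p1 : 0 < a + (c - 1/2) := by linarith
  have p2 : 0 < a + c := by linarith
  have p3 : 0 < a + (c + 1/2) := by linarith
  have p4 : 0 < b + (c - 1/2) := by linarith
  have p5 : 0 < b + c := by linarith
  have p6 : 0 < b + (c + 1/2) := by linarith
  have hsq : (a + c) ^ 2 ≤ (b + c) ^ 2 := by nlinarith
  have key : ((a + (c - 1/2)) * (a + (c + 1/2))) * ((b + c) * (b + c))
      ≤ ((b + (c - 1/2)) * (b + (c + 1/2))) * ((a + c) * (a + c)) := by nlinarith
  have hpos : 0 < ((a + (c - 1/2)) * (a + (c + 1/2))) * ((b + c) * (b + c)) := by positivity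
  have h5 := Real.log_le_log hpos key
  rw [Real.log_mul (by positivity) (by positivity), Real.log_mul p1.ne' p3.ne',
    Real.log_mul p5.ne' p5.ne', Real.log_mul (by positivity) (by positivity),
    Real.log_mul p4.ne' p6.ne', Real.log_mul p2.ne' p2.ne'] at h5
  simp only [lam]; linarith

lemma lam_three {a b : ℝ} (ha : 0 ≤ a) (hab : a ≤ b) :
    lam a b 3 ≤ lam a b 5 + lam a b 7 := by
  have p1 : 0 < a + 3 := by linarith
  have p2 : 0 < a + 5 := by linarith
  have p3 : 0 < a + 7 := by linarith
  have p4 : 0 < b + 3 := by linarith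
  have p5 : 0 < b + 5 := by linarith
  have p6 : 0 < b + 7 := by linarith
  have hfac : 0 ≤ (b - a) * (a * b + 3 * a + 3 * b + 1) := by
    apply mul_nonneg (by linarith)
    nlinarith
  have key : (b + 3) * ((a + 5) * (a + 7)) ≤ (a + 3) * ((b + 5) * (b + 7)) := by nlinarith [hfac]
  have hpos : 0 < (b + 3) * ((a + 5) * (a + 7)) := by positivity
  have h5 := Real.log_le_log hpos key
  rw [Real.log_mul p4.ne' (by positivity), Real.log_mul p2.ne' p3.ne',
    Real.log_mul p1.ne' (by positivity), Real.log_mul p5.ne' p6.ne'] at h5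
  simp only [lam]; linarith

lemma lam_le {a b : ℝ} (ha : 0 ≤ a) (hab : a ≤ b) (hb2 : b ≤ 2) {c : ℝ} (hc : 0 < c) :
    lam a b c ≤ Real.log (c + 2) - Real.log c := by
  have h1 : Real.log (b + c) ≤ Real.log (c + 2) := by
    apply Real.log_le_log (by linarith) (by linarith)
  have h2 : Real.log c ≤ Real.log (a + c) := Real.log_le_log hc (by linarith)
  simp only [lam]; linarith

lemma sum_range_two_mul (f : ℕ → ℝ) (m : ℕ) :
    ∑ k ∈ Finset.range (2 * m), f k = ∑ i ∈ Finset.range m, (f (2 * i) + f (2 * i + 1)) := by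
  induction m with
  | zero => simp
  | succ m ih =>
    have h : 2 * (m + 1) = 2 * m + 1 + 1 := by ring
    rw [h, Finset.sum_range_succ, Finset.sum_range_succ, ih, Finset.sum_range_succ]
    ring

lemma telescope (a b : ℝ) (p : ℕ) :
    ∑ i ∈ Finset.range (p + 1),
        (2 * lam a b (5 + 2 * i) - lam a b (3 + 2 * i) - lam a b (9 + 2 * i))
      = lam a b 5 + lam a b 7 + lam a b (2 * p + 5) - lam a b 3 - lam a b (2 * p + 7)
        - lam a b (2 * p + 9) := by
  induction p with
  | zero => norm_num; try ring
  | succ p ih =>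
    rw [Finset.sum_range_succ, ih]
    push_cast
    have e1 : (5 : ℝ) + 2 * ((p : ℝ) + 1) = 2 * p + 7 := by ring
    have e2 : (3 : ℝ) + 2 * ((p : ℝ) + 1) = 2 * p + 5 := by ring
    have e3 : (9 : ℝ) + 2 * ((p : ℝ) + 1) = 2 * p + 11 := by ring
    have e4 : 2 * ((p : ℝ) + 1) + 5 = 2 * p + 7 := by ring
    have e5 : 2 * ((p : ℝ) + 1) + 7 = 2 * p + 9 := by ring
    have e6 : 2 * ((p : ℝ) + 1) + 9 = 2 * p + 11 := by ring
    rw [e1, e2, e3, e4, e5, e6]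
    ring

lemma key {a b : ℝ} (ha : 0 ≤ a) (hab : a ≤ b) (hb2 : b ≤ 2) (p : ℕ) :
    Real.log (2 * (p : ℝ) + 9) - Real.log (2 * (p : ℝ) + 11)
      ≤ ∑ k ∈ Finset.range (2 * (p + 1)),
          (lam a b (4 + 2 * k) + lam a b (9/2 + k) - lam a b (3 + k) - lam a b (9 + 2 * k)) := by
  have e1 : (∑ k ∈ Finset.range (2 * (p + 1)),
        (lam a b (4 + 2 * k) + lam a b (9/2 + k) - lam a b (3 + k) - lam a b (9 + 2 * k)))
      = (∑ k ∈ Finset.range (2 * (p + 1)), lam a b (9/2 + k))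
        - (∑ k ∈ Finset.range (2 * (p + 1)), lam a b (3 + k))
        + ∑ k ∈ Finset.range (2 * (p + 1)), (lam a b (4 + 2 * k) - lam a b (9 + 2 * k)) := by
    rw [← Finset.sum_sub_distrib, ← Finset.sum_add_distrib]
    apply Finset.sum_congr rfl
    intros; ring
  rw [e1]
  -- bound the half-integer sum from below by paired terms
  have hA : ∑ i ∈ Finset.range (p + 1), 2 * lam a b (5 + 2 * i)
      ≤ ∑ k ∈ Finset.range (2 * (p + 1)), lam a b (9/2 + k) := by
    rw [sum_range_two_mul (fun k => lam a b (9/2 + k)) (p + 1)]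
    apply Finset.sum_le_sum
    intro i _
    have hc : (1 : ℝ) ≤ 5 + 2 * (i : ℝ) := by
      have : (0:ℝ) ≤ (i : ℝ) := Nat.cast_nonneg i
      linarith
    have h := lam_pair ha hab hc
    have f1 : (5 : ℝ) + 2 * (i : ℝ) - 1/2 = 9/2 + (2 * i : ℕ) := by push_cast; ring
    have f2 : (5 : ℝ) + 2 * (i : ℝ) + 1/2 = 9/2 + ((2 * i + 1 : ℕ) : ℝ) := by push_cast; ring
    rw [f1, f2] at h
    exact h
  -- split the integer sum
  have hC : (∑ k ∈ Finset.range (2 * (p + 1)), lam a b (3 + k))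
      = ∑ i ∈ Finset.range (p + 1), (lam a b (3 + 2 * i) + lam a b (4 + 2 * i)) := by
    rw [sum_range_two_mul (fun k => lam a b (3 + k)) (p + 1)]
    apply Finset.sum_congr rfl
    intro i _
    have f1 : (3 : ℝ) + ((2 * i : ℕ) : ℝ) = 3 + 2 * i := by push_cast; ring
    have f2 : (3 : ℝ) + ((2 * i + 1 : ℕ) : ℝ) = 4 + 2 * i := by push_cast; ring
    rw [f1, f2]
  -- drop the positive extra terms of the third sum
  have hB : ∑ i ∈ Finset.range (p + 1), (lam a b (4 + 2 * i) - lam a b (9 + 2 * i))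
      ≤ ∑ k ∈ Finset.range (2 * (p + 1)), (lam a b (4 + 2 * k) - lam a b (9 + 2 * k)) := by
    apply Finset.sum_le_sum_of_subset_of_nonneg
    · exact Finset.range_subset_range.mpr (by omega)
    · intro k _ _
      have h1 : 0 < a + (4 + 2 * (k : ℝ)) := by positivity
      exact sub_nonneg.mpr (lam_anti hab h1 (by linarith))
  have hsum : ∑ i ∈ Finset.range (p + 1),
      (2 * lam a b (5 + 2 * i) - lam a b (3 + 2 * i) - lam a b (9 + 2 * i))
      = (∑ i ∈ Finset.range (p + 1), 2 * lam a b (5 + 2 * i))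
        - (∑ i ∈ Finset.range (p + 1), (lam a b (3 + 2 * i) + lam a b (4 + 2 * i)))
        + ∑ i ∈ Finset.range (p + 1), (lam a b (4 + 2 * i) - lam a b (9 + 2 * i)) := by
    rw [← Finset.sum_sub_distrib, ← Finset.sum_add_distrib]
    apply Finset.sum_congr rfl
    intros; ring
  have htel := telescope a b p
  rw [hsum] at htel
  -- final bounds
  have h3 : lam a b 3 ≤ lam a b 5 + lam a b 7 := lam_three ha hab
  have h4 : lam a b (2 * (p : ℝ) + 7) ≤ lam a b (2 * (p : ℝ) + 5) := by
    apply lam_anti hab (by positivity) (by linarith)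
  have h5 : lam a b (2 * (p : ℝ) + 9) ≤ Real.log (2 * (p : ℝ) + 9 + 2) - Real.log (2 * (p : ℝ) + 9) := by
    apply lam_le ha hab hb2 (by positivity)
  have e9 : (2 : ℝ) * (p : ℝ) + 9 + 2 = 2 * (p : ℝ) + 11 := by ring
  rw [e9] at h5
  linarith

/-- The ratio of Gamma sequences. -/
noncomputable def Rseq (x : ℝ) (n : ℕ) : ℝ :=
  Real.GammaSeq (x + 3) n * Real.GammaSeq (x / 2 + 9/2) n /
    (Real.GammaSeq (x / 2 + 2) n * Real.GammaSeq (x + 9/2) n)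

lemma gammaSeq_pos {s : ℝ} (hs : 0 < s) {n : ℕ} (hn : 0 < n) : 0 < Real.GammaSeq s n := by
  unfold Real.GammaSeq
  have hn0 : (0:ℝ) < (n:ℝ) := by exact_mod_cast hn
  have h1 : 0 < (n : ℝ) ^ s := Real.rpow_pos_of_pos hn0 s
  have h2 : 0 < ∏ j ∈ Finset.range (n + 1), (s + (j : ℝ)) :=
    Finset.prod_pos fun j _ => by positivity
  have h3 : (0:ℝ) < (n.factorial : ℝ) := by positivity
  exact div_pos (mul_pos h1 h3) h2

lemma log_gammaSeq {s : ℝ} (hs : 0 < s) {n : ℕ} (hn : 0 < n) :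
    Real.log (Real.GammaSeq s n)
      = s * Real.log n + Real.log (n.factorial) - ∑ j ∈ Finset.range (n + 1), Real.log (s + j) := by
  have hn0 : (0:ℝ) < (n:ℝ) := by exact_mod_cast hn
  have h1 : 0 < (n : ℝ) ^ s := Real.rpow_pos_of_pos hn0 s
  have h2 : 0 < ∏ j ∈ Finset.range (n + 1), (s + (j : ℝ)) :=
    Finset.prod_pos fun j _ => by positivity
  have h3 : (0:ℝ) < (n.factorial : ℝ) := by positivity
  unfold Real.GammaSeq
  rw [Real.log_div (mul_pos h1 h3).ne' h2.ne', Real.log_mul h1.ne' h3.ne',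
    Real.log_rpow hn0, Real.log_prod (s := Finset.range (n+1)) (f := fun j => s + (j:ℝ)) fun j _ => (show (0:ℝ) < s + (j:ℝ) by positivity).ne']

lemma log_Rseq {x : ℝ} (hx : 0 ≤ x) {n : ℕ} (hn : 0 < n) :
    Real.log (Rseq x n) = Real.log n + ∑ k ∈ Finset.range (n + 1),
      (Real.log (x + (4 + 2 * k)) + Real.log (x + (9/2 + k)) - Real.log (x + (3 + k))
        - Real.log (x + (9 + 2 * k))) := by
  have h1 : 0 < x + 3 := by linarith
  have h2 : 0 < x / 2 + 9/2 := by linarith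
  have h3 : 0 < x / 2 + 2 := by linarith
  have h4 : 0 < x + 9/2 := by linarith
  have hg1 := gammaSeq_pos h1 hn
  have hg2 := gammaSeq_pos h2 hn
  have hg3 := gammaSeq_pos h3 hn
  have hg4 := gammaSeq_pos h4 hn
  unfold Rseq
  rw [Real.log_div (mul_pos hg1 hg2).ne' (mul_pos hg3 hg4).ne', Real.log_mul hg1.ne' hg2.ne',
    Real.log_mul hg3.ne' hg4.ne', log_gammaSeq h1 hn, log_gammaSeq h2 hn, log_gammaSeq h3 hn,
    log_gammaSeq h4 hn]
  have e1 : ∀ j ∈ Finset.range (n + 1),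
      Real.log (x / 2 + 2 + (j : ℝ)) = Real.log (x + (4 + 2 * j)) - Real.log 2 := by
    intro j _
    rw [show x / 2 + 2 + (j : ℝ) = (x + (4 + 2 * j)) / 2 by ring,
      Real.log_div (by positivity) two_ne_zero]
  have e2 : ∀ j ∈ Finset.range (n + 1),
      Real.log (x / 2 + 9/2 + (j : ℝ)) = Real.log (x + (9 + 2 * j)) - Real.log 2 := by
    intro j _
    rw [show x / 2 + 9/2 + (j : ℝ) = (x + (9 + 2 * j)) / 2 by ring,
      Real.log_div (by positivity) two_ne_zero]
  have e3 : ∀ j ∈ Finset.range (n + 1),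
      Real.log (x + 3 + (j : ℝ)) = Real.log (x + (3 + j)) := by
    intro j _; rw [show x + 3 + (j : ℝ) = x + (3 + j) by ring]
  have e4 : ∀ j ∈ Finset.range (n + 1),
      Real.log (x + 9/2 + (j : ℝ)) = Real.log (x + (9/2 + j)) := by
    intro j _; rw [show x + 9/2 + (j : ℝ) = x + (9/2 + j) by ring]
  rw [Finset.sum_congr rfl e1, Finset.sum_congr rfl e2, Finset.sum_congr rfl e3,
    Finset.sum_congr rfl e4]
  simp only [Finset.sum_sub_distrib, Finset.sum_add_distrib, Finset.sum_const,
    Finset.card_range, nsmul_eq_mul]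
  ring

lemma Rseq_pos {x : ℝ} (hx : 0 ≤ x) {n : ℕ} (hn : 0 < n) : 0 < Rseq x n := by
  have h1 : 0 < x + 3 := by linarith
  have h2 : 0 < x / 2 + 9/2 := by linarith
  have h3 : 0 < x / 2 + 2 := by linarith
  have h4 : 0 < x + 9/2 := by linarith
  have hg1 := gammaSeq_pos h1 hn
  have hg2 := gammaSeq_pos h2 hn
  have hg3 := gammaSeq_pos h3 hn
  have hg4 := gammaSeq_pos h4 hn
  unfold Rseq
  exact div_pos (mul_pos hg1 hg2) (mul_pos hg3 hg4)

lemma Rseq_ratio {a b : ℝ} (ha : 0 ≤ a) (hab : a ≤ b) (hb2 : b ≤ 2) (p : ℕ) :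
    Rseq a (2 * p + 1) * ((2 * (p : ℝ) + 9) / (2 * (p : ℝ) + 11)) ≤ Rseq b (2 * p + 1) := by
  set n := 2 * p + 1 with hn
  have hb0 : 0 ≤ b := le_trans ha hab
  have hdiff : Real.log (Rseq b n) - Real.log (Rseq a n)
      = ∑ k ∈ Finset.range (n + 1),
          (lam a b (4 + 2 * k) + lam a b (9/2 + k) - lam a b (3 + k) - lam a b (9 + 2 * k)) := by
    have hn1 : 0 < n := by omega
    rw [log_Rseq ha hn1, log_Rseq hb0 hn1]
    rw [show (Real.log n + ∑ k ∈ Finset.range (n + 1),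
          (Real.log (b + (4 + 2 * k)) + Real.log (b + (9/2 + k)) - Real.log (b + (3 + k))
            - Real.log (b + (9 + 2 * k))))
        - (Real.log n + ∑ k ∈ Finset.range (n + 1),
          (Real.log (a + (4 + 2 * k)) + Real.log (a + (9/2 + k)) - Real.log (a + (3 + k))
            - Real.log (a + (9 + 2 * k))))
        = (∑ k ∈ Finset.range (n + 1),
          (Real.log (b + (4 + 2 * k)) + Real.log (b + (9/2 + k)) - Real.log (b + (3 + k))
            - Real.log (b + (9 + 2 * k))))
          - ∑ k ∈ Finset.range (n + 1),
          (Real.log (a + (4 + 2 * k)) + Real.log (a + (9/2 + k)) - Real.log (a + (3 + k))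
            - Real.log (a + (9 + 2 * k))) from by ring]
    rw [← Finset.sum_sub_distrib]
    apply Finset.sum_congr rfl
    intros; simp only [lam]; ring
  have hkey := key ha hab hb2 p
  rw [show 2 * (p + 1) = n + 1 from by omega] at hkey
  have hn1 : 0 < n := by omega
  have hRa := Rseq_pos ha hn1
  have hRb := Rseq_pos hb0 hn1
  have hc9 : (0 : ℝ) < 2 * (p : ℝ) + 9 := by positivity
  have hc11 : (0 : ℝ) < 2 * (p : ℝ) + 11 := by positivity
  have hlog : Real.log (Rseq a n * ((2 * (p : ℝ) + 9) / (2 * (p : ℝ) + 11)))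
      ≤ Real.log (Rseq b n) := by
    rw [Real.log_mul hRa.ne' (by positivity), Real.log_div hc9.ne' hc11.ne']
    linarith
  exact (Real.log_le_log_iff (by positivity) hRb).mp hlog

lemma Rseq_tendsto {x : ℝ} (hx : 0 ≤ x) :
    Tendsto (fun n => Rseq x n) atTop
      (𝓝 (Real.Gamma (x + 3) * Real.Gamma (x / 2 + 9/2) /
        (Real.Gamma (x / 2 + 2) * Real.Gamma (x + 9/2)))) := by
  have h3 : 0 < x / 2 + 2 := by linarith
  have h4 : 0 < x + 9/2 := by linarith
  have hne : Real.Gamma (x / 2 + 2) * Real.Gamma (x + 9/2) ≠ 0 :=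
    (mul_pos (Real.Gamma_pos_of_pos h3) (Real.Gamma_pos_of_pos h4)).ne'
  exact ((Real.GammaSeq_tendsto_Gamma (x + 3)).mul
    (Real.GammaSeq_tendsto_Gamma (x / 2 + 9/2))).div
    (((Real.GammaSeq_tendsto_Gamma (x / 2 + 2)).mul
      (Real.GammaSeq_tendsto_Gamma (x + 9/2)))) hne

lemma ratio_tendsto_one :
    Tendsto (fun p : ℕ => (2 * (p : ℝ) + 9) / (2 * (p : ℝ) + 11)) atTop (𝓝 1) := by
  have h2 : Tendsto (fun p : ℕ => 2 * (p : ℝ) + 11) atTop atTop := by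
    apply Filter.tendsto_atTop_add_const_right
    exact Tendsto.const_mul_atTop two_pos tendsto_natCast_atTop_atTop
  have h0 : Tendsto (fun p : ℕ => 2 / (2 * (p : ℝ) + 11)) atTop (𝓝 0) :=
    Filter.Tendsto.div_atTop tendsto_const_nhds h2
  have he : ∀ p : ℕ, (2 * (p : ℝ) + 9) / (2 * (p : ℝ) + 11) = 1 - 2 / (2 * (p : ℝ) + 11) := by
    intro p
    have : (2 * (p : ℝ) + 11) ≠ 0 := by positivity
    field_simp
    ring
  have h1 : Tendsto (fun p : ℕ => 1 - 2 / (2 * (p : ℝ) + 11)) atTop (𝓝 (1 - 0)) :=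
    tendsto_const_nhds.sub h0
  rw [sub_zero] at h1
  exact h1.congr fun p => (he p).symm

end FMonoAux

theorem F_monotone :
    MonotoneOn (fun α : ℝ =>
      Real.Gamma (α + 3) * Real.Gamma (α / 2 + 9 / 2) /
        (Real.Gamma (α / 2 + 2) * Real.Gamma (α + 9 / 2)))
      (Set.Icc 0 2) := by
  intro x hx y hy hxy
  obtain ⟨hx0, hx2⟩ := hx
  obtain ⟨hy0, hy2⟩ := hy
  simp only
  have hmono : StrictMono (fun p : ℕ => 2 * p + 1) := by
    intro i j hij; simp only []; omega
  have hsub := hmono.tendsto_atTop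
  have hA : Filter.Tendsto (fun p : ℕ => FMonoAux.Rseq x (2 * p + 1)) Filter.atTop
      (nhds (Real.Gamma (x + 3) * Real.Gamma (x / 2 + 9/2) /
        (Real.Gamma (x / 2 + 2) * Real.Gamma (x + 9/2)))) :=
    (FMonoAux.Rseq_tendsto hx0).comp hsub
  have hB : Filter.Tendsto (fun p : ℕ => FMonoAux.Rseq y (2 * p + 1)) Filter.atTop
      (nhds (Real.Gamma (y + 3) * Real.Gamma (y / 2 + 9/2) /
        (Real.Gamma (y / 2 + 2) * Real.Gamma (y + 9/2)))) :=
    (FMonoAux.Rseq_tendsto hy0).comp hsub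
  have hAc : Filter.Tendsto
      (fun p : ℕ => FMonoAux.Rseq x (2 * p + 1) * ((2 * (p : ℝ) + 9) / (2 * (p : ℝ) + 11)))
      Filter.atTop
      (nhds (Real.Gamma (x + 3) * Real.Gamma (x / 2 + 9/2) /
        (Real.Gamma (x / 2 + 2) * Real.Gamma (x + 9/2)) * 1)) :=
    hA.mul FMonoAux.ratio_tendsto_one
  rw [mul_one] at hAc
  have hle := le_of_tendsto_of_tendsto' hAc hB
    (fun p => FMonoAux.Rseq_ratio hx0 hxy hy2 p)
  exact hle
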